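/- Let ρ be a density matrix on ℂ^d⊗ℂ^d, R a positive semidefinite source-operator of type T₁₂₂ for ρ, σ_R = tr^{(1)}[R] its reduced density matrix on ℂ^d⊗ℂ^d, and ε ∈ {+1, −1}. Suppose W₂, W̃₂ are Hermitian matrices on ℂ^d with operator norms at most 1 such that tr[σ_R(W₂⊗W̃₂)] = ε·tr[ρ(W₂⊗W̃₂)]. Then for every Hermitian matrix W₁ on ℂ^d with operator norm at most 1: |tr[ρ(W₁⊗W₂)] − tr[ρ(W₁⊗W̃₂)]| ≤ 1 − ε·tr[ρ(W₂⊗W̃₂)]. -/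

import Mathlib

open Matrix
open scoped Kronecker ComplexOrder

namespace BellPaper

variable {α β γ : Type*} [Fintype α] [Fintype β] [Fintype γ]

/-- Partial trace over the first factor of a threefold tensor product. -/
noncomputable def ptr1 (T : Matrix ((α × β) × γ) ((α × β) × γ) ℂ) :
    Matrix (β × γ) (β × γ) ℂ :=
  fun p q => ∑ i : α, T ((i, p.1), p.2) ((i, q.1), q.2)

/-- Partial trace over the second factor of a threefold tensor product. -/
noncomputable def ptr2 (T : Matrix ((α × β) × γ) ((α × β) × γ) ℂ) :
    Matrix (α × γ) (α × γ) ℂ :=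
  fun p q => ∑ j : β, T ((p.1, j), p.2) ((q.1, j), q.2)

/-- Partial trace over the third factor of a threefold tensor product. -/
noncomputable def ptr3 (T : Matrix ((α × β) × γ) ((α × β) × γ) ℂ) :
    Matrix (α × β) (α × β) ℂ :=
  fun p q => ∑ k : γ, T (p, k) (q, k)

/-- Partial trace over the second factor of a twofold tensor product. -/
noncomputable def ptrB (M : Matrix (α × β) (α × β) ℂ) : Matrix α α ℂ :=
  fun i i' => ∑ j : β, M (i, j) (i', j)

/-- A density matrix: positive semidefinite with unit trace. -/
def IsDensityMatrix {n : Type*} [Fintype n] (ρ : Matrix n n ℂ) : Prop :=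
  ρ.PosSemidef ∧ ρ.trace = 1

/-- Source-operator of type `T₁₂₂` for a state on ℂ^{d₁}⊗ℂ^{d₂}. -/
def IsSource122 {d₁ d₂ : ℕ} (ρ : Matrix (Fin d₁ × Fin d₂) (Fin d₁ × Fin d₂) ℂ)
    (T : Matrix ((Fin d₁ × Fin d₂) × Fin d₂) ((Fin d₁ × Fin d₂) × Fin d₂) ℂ) : Prop :=
  T.IsHermitian ∧ ptr2 T = ρ ∧ ptr3 T = ρ

/-- Source-operator of type `T₁₁₂` for a state on ℂ^{d₁}⊗ℂ^{d₂}. -/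
def IsSource112 {d₁ d₂ : ℕ} (ρ : Matrix (Fin d₁ × Fin d₂) (Fin d₁ × Fin d₂) ℂ)
    (S : Matrix ((Fin d₁ × Fin d₁) × Fin d₂) ((Fin d₁ × Fin d₁) × Fin d₂) ℂ) : Prop :=
  S.IsHermitian ∧ ptr1 S = ρ ∧ ptr2 S = ρ

/-- A DSO state: a density matrix admitting a positive semidefinite source-operator. -/
def IsDSO {d₁ d₂ : ℕ} (ρ : Matrix (Fin d₁ × Fin d₂) (Fin d₁ × Fin d₂) ℂ) : Prop :=
  IsDensityMatrix ρ ∧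
    ((∃ T, T.PosSemidef ∧ IsSource122 ρ T) ∨ (∃ S, S.PosSemidef ∧ IsSource112 ρ S))

/-- A Bell class state: a density matrix admitting a density source-operator with the
special dilation property (all three partial traces equal the state). -/
def IsBellClass {d : ℕ} (ρ : Matrix (Fin d × Fin d) (Fin d × Fin d) ℂ) : Prop :=
  IsDensityMatrix ρ ∧
    ∃ T : Matrix ((Fin d × Fin d) × Fin d) ((Fin d × Fin d) × Fin d) ℂ,
      T.PosSemidef ∧ ptr1 T = ρ ∧ ptr2 T = ρ ∧ ptr3 T = ρ

/-- The operator (spectral) norm of a matrix acting on a Euclidean space. -/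
noncomputable def opNorm {n : Type*} [Fintype n] [DecidableEq n] (W : Matrix n n ℂ) : ℝ :=
  ‖Matrix.toEuclideanCLM (𝕜 := ℂ) W‖

/-- The swap (permutation) operator `V_d` on ℂ^d ⊗ ℂ^d. -/
noncomputable def swapMat (d : ℕ) : Matrix (Fin d × Fin d) (Fin d × Fin d) ℂ :=
  fun p q => if p.1 = q.2 ∧ p.2 = q.1 then 1 else 0

/-- The Werner state on ℂ^d ⊗ ℂ^d. -/
noncomputable def werner (d : ℕ) : Matrix (Fin d × Fin d) (Fin d × Fin d) ℂ :=
  (((d : ℂ) + 1) / (d : ℂ) ^ 3) • (1 : Matrix (Fin d × Fin d) (Fin d × Fin d) ℂ)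
    - ((d : ℂ) ^ 2)⁻¹ • swapMat d

/-- The triple of indices of a point of the threefold product. -/
def triple {d : ℕ} (p : (Fin d × Fin d) × Fin d) : Fin 3 → Fin d := ![p.1.1, p.1.2, p.2]

/-- The unitary permuting the three tensor factors of ℂ^d ⊗ ℂ^d ⊗ ℂ^d according to π. -/
noncomputable def permMat (d : ℕ) (π : Equiv.Perm (Fin 3)) :
    Matrix ((Fin d × Fin d) × Fin d) ((Fin d × Fin d) × Fin d) ℂ :=
  fun p q => if ∀ i, triple p (π i) = triple q i then 1 else 0

/-- The antisymmetrization projection `Q_d^{(-)}` on ℂ^d ⊗ ℂ^d ⊗ ℂ^d. -/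
noncomputable def antisym (d : ℕ) :
    Matrix ((Fin d × Fin d) × Fin d) ((Fin d × Fin d) × Fin d) ℂ :=
  (6 : ℂ)⁻¹ • ∑ π : Equiv.Perm (Fin 3), (((Equiv.Perm.sign π : ℤ) : ℂ)) • permMat d π

/-- Tensor product of two vectors. -/
def tens {m n : Type*} (u : m → ℂ) (v : n → ℂ) : m × n → ℂ := fun p => u p.1 * v p.2

/-- The rank-one operator |v⟩⟨v|. -/
noncomputable def outer {n : Type*} (v : n → ℂ) : Matrix n n ℂ :=
  Matrix.vecMulVec v (star v)



section Aux

/-! ### Auxiliary lemmas -/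

lemma kron_conjT {m n : Type*} (A : Matrix m m ℂ) (B : Matrix n n ℂ) :
    (A ⊗ₖ B)ᴴ = Aᴴ ⊗ₖ Bᴴ := by
  ext ⟨i, j⟩ ⟨k, l⟩
  simp [Matrix.conjTranspose_apply, Matrix.kroneckerMap_apply, star_mul']

lemma psd_kron {m n : Type*} [Fintype m] [Fintype n] [DecidableEq m] [DecidableEq n]
    {A : Matrix m m ℂ} {B : Matrix n n ℂ} (hA : A.PosSemidef) (hB : B.PosSemidef) :
    (A ⊗ₖ B).PosSemidef := by
  obtain ⟨P, rfl⟩ := (show ∃ P : Matrix m m ℂ, A = Pᴴ * P by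
    open scoped MatrixOrder in exact CStarAlgebra.nonneg_iff_eq_star_mul_self.mp hA.nonneg)
  obtain ⟨Q, rfl⟩ := (show ∃ Q : Matrix n n ℂ, B = Qᴴ * Q by
    open scoped MatrixOrder in exact CStarAlgebra.nonneg_iff_eq_star_mul_self.mp hB.nonneg)
  rw [Matrix.mul_kronecker_mul, ← kron_conjT]
  exact Matrix.posSemidef_conjTranspose_mul_self _

lemma trace_mul_psd_nonneg {n : Type*} [Fintype n] [DecidableEq n]
    {R K : Matrix n n ℂ} (hR : R.PosSemidef) (hK : K.PosSemidef) :
    ∃ r : ℝ, 0 ≤ r ∧ (R * K).trace = (r : ℂ) := by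
  obtain ⟨P, rfl⟩ := (show ∃ P : Matrix n n ℂ, R = Pᴴ * P by
    open scoped MatrixOrder in exact CStarAlgebra.nonneg_iff_eq_star_mul_self.mp hR.nonneg)
  have h1 : (Pᴴ * P * K).trace = (P * K * Pᴴ).trace := by
    rw [Matrix.mul_assoc, Matrix.trace_mul_comm, Matrix.mul_assoc]
  have h2 : (P * K * Pᴴ).PosSemidef := hK.mul_mul_conjTranspose_same P
  have h3 : (0 : ℂ) ≤ (P * K * Pᴴ).trace := by
    apply Finset.sum_nonneg
    intro i _
    have := h2.dotProduct_mulVec_nonneg (Pi.single i 1)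
    simpa [Matrix.mulVec_single, dotProduct, Pi.single_apply] using this
  rw [Complex.le_def] at h3
  refine ⟨(P * K * Pᴴ).trace.re, by simpa using h3.1, ?_⟩
  rw [h1]
  exact Complex.ext rfl (by simpa using h3.2.symm)

lemma quad_form_bound' {n : Type*} [Fintype n] [DecidableEq n] (W : Matrix n n ℂ)
    (x : n → ℂ) :
    ‖star x ⬝ᵥ W *ᵥ x‖ ≤ ‖Matrix.toEuclideanCLM (𝕜 := ℂ) W‖ * (star x ⬝ᵥ x).re := by
  set y : EuclideanSpace ℂ n := WithLp.toLp 2 x with hy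
  have h1 : star x ⬝ᵥ W *ᵥ x = inner ℂ y (Matrix.toEuclideanCLM (𝕜 := ℂ) W y) := by
    rw [hy, Matrix.toEuclideanCLM_toLp, EuclideanSpace.inner_toLp_toLp, dotProduct_comm]
  have h2 : (star x ⬝ᵥ x : ℂ) = (‖y‖ : ℂ) ^ 2 := by
    rw [dotProduct_comm, ← EuclideanSpace.inner_toLp_toLp, ← hy, inner_self_eq_norm_sq_to_K]
    norm_cast
  have h3 : (star x ⬝ᵥ x).re = ‖y‖ ^ 2 := by rw [h2]; norm_cast
  rw [h1, h3]
  calc ‖inner ℂ y (Matrix.toEuclideanCLM (𝕜 := ℂ) W y)‖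
      ≤ ‖y‖ * ‖Matrix.toEuclideanCLM (𝕜 := ℂ) W y‖ := by
        simpa using norm_inner_le_norm (𝕜 := ℂ) y (Matrix.toEuclideanCLM (𝕜 := ℂ) W y)
    _ ≤ ‖y‖ * (‖Matrix.toEuclideanCLM (𝕜 := ℂ) W‖ * ‖y‖) :=
        mul_le_mul_of_nonneg_left ((Matrix.toEuclideanCLM (𝕜 := ℂ) W).le_opNorm y)
          (norm_nonneg y)
    _ = ‖Matrix.toEuclideanCLM (𝕜 := ℂ) W‖ * ‖y‖ ^ 2 := by ring

lemma quad_form_real' {n : Type*} [Fintype n] {W : Matrix n n ℂ} (hW : W.IsHermitian)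
    (x : n → ℂ) : (star x ⬝ᵥ W *ᵥ x).im = 0 := by
  have h : star (star x ⬝ᵥ W *ᵥ x) = star x ⬝ᵥ W *ᵥ x := by
    conv_lhs => rw [Matrix.star_dotProduct, star_star, Matrix.star_mulVec,
      ← Matrix.dotProduct_mulVec, hW.eq]
  have h2 := congrArg Complex.im h
  simp only [Complex.star_def, Complex.conj_im] at h2
  linarith

lemma dot_self_re_nonneg' {n : Type*} [Fintype n] (x : n → ℂ) :
    0 ≤ (star x ⬝ᵥ x).re := by
  simp only [dotProduct, Pi.star_apply, Complex.re_sum]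
  apply Finset.sum_nonneg
  intro i _
  have : (star (x i) * x i).re = (x i).re ^ 2 + (x i).im ^ 2 := by
    simp [Complex.mul_re]; ring
  rw [this]; positivity

lemma posSemidef_one_add' {n : Type*} [Fintype n] [DecidableEq n] {W : Matrix n n ℂ}
    (hW : W.IsHermitian) (hn : ‖Matrix.toEuclideanCLM (𝕜 := ℂ) W‖ ≤ 1) :
    (1 + W).PosSemidef := by
  refine Matrix.PosSemidef.of_dotProduct_mulVec_nonneg (Matrix.isHermitian_one.add hW) fun x => ?_
  rw [Matrix.add_mulVec, Matrix.one_mulVec, dotProduct_add, Complex.le_def]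
  have him : (star x ⬝ᵥ x).im = 0 := by
    have := quad_form_real' (Matrix.isHermitian_one (n := n) (α := ℂ)) x
    simpa [Matrix.one_mulVec] using this
  have hWim := quad_form_real' hW x
  have hb := quad_form_bound' W x
  have hxx := dot_self_re_nonneg' x
  constructor
  · simp only [Complex.add_re, Complex.zero_re]
    have hle : |(star x ⬝ᵥ W *ᵥ x).re| ≤ (star x ⬝ᵥ x).re := by
      calc |(star x ⬝ᵥ W *ᵥ x).re| ≤ ‖star x ⬝ᵥ W *ᵥ x‖ := Complex.abs_re_le_norm _
        _ ≤ ‖Matrix.toEuclideanCLM (𝕜 := ℂ) W‖ * (star x ⬝ᵥ x).re := hb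
        _ ≤ 1 * (star x ⬝ᵥ x).re := mul_le_mul_of_nonneg_right hn hxx
        _ = (star x ⬝ᵥ x).re := one_mul _
    linarith [(abs_le.mp hle).1]
  · simp [him, hWim]

lemma posSemidef_one_sub' {n : Type*} [Fintype n] [DecidableEq n] {W : Matrix n n ℂ}
    (hW : W.IsHermitian) (hn : ‖Matrix.toEuclideanCLM (𝕜 := ℂ) W‖ ≤ 1) :
    (1 - W).PosSemidef := by
  rw [sub_eq_add_neg]
  refine posSemidef_one_add' hW.neg ?_
  rw [map_neg, norm_neg]
  exact hn

lemma trace_mul_kron_one3 [DecidableEq γ] (R : Matrix ((α × β) × γ) ((α × β) × γ) ℂ)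
    (X : Matrix α α ℂ) (Y : Matrix β β ℂ) :
    (R * ((X ⊗ₖ Y) ⊗ₖ (1 : Matrix γ γ ℂ))).trace = (ptr3 R * (X ⊗ₖ Y)).trace := by
  simp only [Matrix.trace, Matrix.diag, Matrix.mul_apply, ptr3, kroneckerMap_apply,
    Matrix.one_apply, Fintype.sum_prod_type, mul_ite, mul_one, mul_zero,
    Finset.sum_ite_eq, Finset.sum_ite_eq', Finset.mem_univ, if_true, Finset.sum_mul,
    Finset.mul_sum]
  refine Finset.sum_congr rfl fun a _ => Finset.sum_congr rfl fun b _ => ?_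
  rw [Finset.sum_comm]
  refine Finset.sum_congr rfl fun a' _ => ?_
  rw [Finset.sum_comm]

lemma trace_mul_kron_one2 [DecidableEq β] (R : Matrix ((α × β) × γ) ((α × β) × γ) ℂ)
    (X : Matrix α α ℂ) (Y : Matrix γ γ ℂ) :
    (R * ((X ⊗ₖ (1 : Matrix β β ℂ)) ⊗ₖ Y)).trace = (ptr2 R * (X ⊗ₖ Y)).trace := by
  simp only [Matrix.trace, Matrix.diag, Matrix.mul_apply, ptr2, kroneckerMap_apply,
    Matrix.one_apply, Fintype.sum_prod_type, mul_ite, mul_one, mul_zero, ite_mul, zero_mul,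
    Finset.sum_ite_irrel, Finset.sum_const_zero,
    Finset.sum_ite_eq, Finset.sum_ite_eq', Finset.mem_univ, if_true, Finset.sum_mul,
    Finset.mul_sum, one_mul]
  refine Finset.sum_congr rfl fun a _ => ?_
  rw [Finset.sum_comm]
  refine Finset.sum_congr rfl fun c _ => ?_
  rw [Finset.sum_comm]
  refine Finset.sum_congr rfl fun a' _ => ?_
  rw [Finset.sum_comm]

lemma trace_mul_kron_one1 [DecidableEq α] (R : Matrix ((α × β) × γ) ((α × β) × γ) ℂ)
    (X : Matrix β β ℂ) (Y : Matrix γ γ ℂ) :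
    (R * (((1 : Matrix α α ℂ) ⊗ₖ X) ⊗ₖ Y)).trace = (ptr1 R * (X ⊗ₖ Y)).trace := by
  simp only [Matrix.trace, Matrix.diag, Matrix.mul_apply, ptr1, kroneckerMap_apply,
    Matrix.one_apply, Fintype.sum_prod_type, mul_ite, mul_one, mul_zero, ite_mul, zero_mul,
    Finset.sum_ite_irrel, Finset.sum_const_zero,
    Finset.sum_ite_eq, Finset.sum_ite_eq', Finset.mem_univ, if_true, Finset.sum_mul,
    Finset.mul_sum, one_mul]
  rw [Finset.sum_comm]
  refine Finset.sum_congr rfl fun b _ => ?_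
  rw [Finset.sum_comm]
  refine Finset.sum_congr rfl fun c _ => ?_
  rw [Finset.sum_comm]
  refine Finset.sum_congr rfl fun b' _ => ?_
  rw [Finset.sum_comm]

lemma trace_ptr3 (R : Matrix ((α × β) × γ) ((α × β) × γ) ℂ) :
    (ptr3 R).trace = R.trace := by
  simp only [Matrix.trace, Matrix.diag, ptr3, Fintype.sum_prod_type]

lemma kron_identity_minus {d : ℕ} (A B C : Matrix (Fin d) (Fin d) ℂ) :
    ((1 + A) ⊗ₖ (1 - B)) ⊗ₖ (1 + C) + ((1 - A) ⊗ₖ (1 + B)) ⊗ₖ (1 - C)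
      = (2 : ℂ) • (((1 : Matrix (Fin d × Fin d) (Fin d × Fin d) ℂ) ⊗ₖ
            (1 : Matrix (Fin d) (Fin d) ℂ))
          - ((1 : Matrix (Fin d) (Fin d) ℂ) ⊗ₖ B) ⊗ₖ C - (A ⊗ₖ B) ⊗ₖ 1 + (A ⊗ₖ 1) ⊗ₖ C) := by
  have h1 : (1 : Matrix (Fin d × Fin d) (Fin d × Fin d) ℂ)
      = (1 : Matrix (Fin d) (Fin d) ℂ) ⊗ₖ (1 : Matrix (Fin d) (Fin d) ℂ) :=
    (Matrix.one_kronecker_one).symm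
  rw [h1]
  ext ⟨⟨i, j⟩, k⟩ ⟨⟨i', j'⟩, k'⟩
  simp only [Matrix.add_apply, Matrix.sub_apply, Matrix.smul_apply,
    Matrix.kroneckerMap_apply, smul_eq_mul]
  ring

lemma kron_identity_plus {d : ℕ} (A B C : Matrix (Fin d) (Fin d) ℂ) :
    ((1 - A) ⊗ₖ (1 - B)) ⊗ₖ (1 + C) + ((1 + A) ⊗ₖ (1 + B)) ⊗ₖ (1 - C)
      = (2 : ℂ) • (((1 : Matrix (Fin d × Fin d) (Fin d × Fin d) ℂ) ⊗ₖ
            (1 : Matrix (Fin d) (Fin d) ℂ))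
          - ((1 : Matrix (Fin d) (Fin d) ℂ) ⊗ₖ B) ⊗ₖ C + (A ⊗ₖ B) ⊗ₖ 1 - (A ⊗ₖ 1) ⊗ₖ C) := by
  have h1 : (1 : Matrix (Fin d × Fin d) (Fin d × Fin d) ℂ)
      = (1 : Matrix (Fin d) (Fin d) ℂ) ⊗ₖ (1 : Matrix (Fin d) (Fin d) ℂ) :=
    (Matrix.one_kronecker_one).symm
  rw [h1]
  ext ⟨⟨i, j⟩, k⟩ ⟨⟨i', j'⟩, k'⟩
  simp only [Matrix.add_apply, Matrix.sub_apply, Matrix.smul_apply,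
    Matrix.kroneckerMap_apply, smul_eq_mul]
  ring

end Aux

/-- the general sufficient condition (42) implies the original Bell
inequality (43), in its perfect correlation (ε = -1 sign convention: `1 - ε·tr[...]`)
or anticorrelation form. -/
theorem general_sufficient_condition {d : ℕ}
    (ρ : Matrix (Fin d × Fin d) (Fin d × Fin d) ℂ) (hρ : IsDensityMatrix ρ)
    (R : Matrix ((Fin d × Fin d) × Fin d) ((Fin d × Fin d) × Fin d) ℂ)
    (hRpos : R.PosSemidef) (hRsrc : IsSource122 ρ R)
    (ε : ℝ) (hε : ε = 1 ∨ ε = -1)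
    (W₂ W₂' : Matrix (Fin d) (Fin d) ℂ)
    (hW₂ : W₂.IsHermitian) (hW₂' : W₂'.IsHermitian)
    (hn₂ : opNorm W₂ ≤ 1) (hn₂' : opNorm W₂' ≤ 1)
    (hcond : (ptr1 R * (W₂ ⊗ₖ W₂')).trace = (ε : ℂ) * (ρ * (W₂ ⊗ₖ W₂')).trace)
    (W₁ : Matrix (Fin d) (Fin d) ℂ) (hW₁ : W₁.IsHermitian) (hn₁ : opNorm W₁ ≤ 1) :
    ‖(ρ * (W₁ ⊗ₖ W₂)).trace - (ρ * (W₁ ⊗ₖ W₂')).trace‖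
      ≤ 1 - ε * ((ρ * (W₂ ⊗ₖ W₂')).trace).re := by
  classical
  obtain ⟨hRherm, hptr2, hptr3⟩ := hRsrc
  have hp₁ : (1 + W₁).PosSemidef := posSemidef_one_add' hW₁ hn₁
  have hm₁ : (1 - W₁).PosSemidef := posSemidef_one_sub' hW₁ hn₁
  have hp₂ : (1 + W₂).PosSemidef := posSemidef_one_add' hW₂ hn₂
  have hm₂ : (1 - W₂).PosSemidef := posSemidef_one_sub' hW₂ hn₂
  have hp₃ : (1 + W₂').PosSemidef := posSemidef_one_add' hW₂' hn₂'
  have hm₃ : (1 - W₂').PosSemidef := posSemidef_one_sub' hW₂' hn₂'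
  obtain ⟨r1, hr1, e1⟩ := trace_mul_psd_nonneg hRpos (psd_kron (psd_kron hp₁ hm₂) hp₃)
  obtain ⟨r2, hr2, e2⟩ := trace_mul_psd_nonneg hRpos (psd_kron (psd_kron hm₁ hp₂) hm₃)
  obtain ⟨r3, hr3, e3⟩ := trace_mul_psd_nonneg hRpos (psd_kron (psd_kron hm₁ hm₂) hp₃)
  obtain ⟨r4, hr4, e4⟩ := trace_mul_psd_nonneg hRpos (psd_kron (psd_kron hp₁ hp₂) hm₃)
  have hT3 : (R * ((W₁ ⊗ₖ W₂) ⊗ₖ (1 : Matrix (Fin d) (Fin d) ℂ))).trace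
      = (ρ * (W₁ ⊗ₖ W₂)).trace := by
    rw [trace_mul_kron_one3, hptr3]
  have hT2 : (R * ((W₁ ⊗ₖ (1 : Matrix (Fin d) (Fin d) ℂ)) ⊗ₖ W₂')).trace
      = (ρ * (W₁ ⊗ₖ W₂')).trace := by
    rw [trace_mul_kron_one2, hptr2]
  have hT1 : (R * (((1 : Matrix (Fin d) (Fin d) ℂ) ⊗ₖ W₂) ⊗ₖ W₂')).trace
      = (ε : ℂ) * (ρ * (W₂ ⊗ₖ W₂')).trace := by
    rw [trace_mul_kron_one1, hcond]
  have hTE : (R * (((1 : Matrix (Fin d × Fin d) (Fin d × Fin d) ℂ))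
      ⊗ₖ (1 : Matrix (Fin d) (Fin d) ℂ))).trace = 1 := by
    rw [Matrix.one_kronecker_one, Matrix.mul_one, ← trace_ptr3, hptr3, hρ.2]
  have hsum1 : (r1 : ℂ) + r2
      = 2 * (1 - (ε : ℂ) * (ρ * (W₂ ⊗ₖ W₂')).trace
          - (ρ * (W₁ ⊗ₖ W₂)).trace + (ρ * (W₁ ⊗ₖ W₂')).trace) := by
    rw [← e1, ← e2, ← Matrix.trace_add, ← Matrix.mul_add, kron_identity_minus,
      Matrix.mul_smul, Matrix.trace_smul]
    simp only [Matrix.mul_add, Matrix.mul_sub, Matrix.trace_add, Matrix.trace_sub,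
      hTE, hT1, hT3, hT2, smul_eq_mul]
  have hsum2 : (r3 : ℂ) + r4
      = 2 * (1 - (ε : ℂ) * (ρ * (W₂ ⊗ₖ W₂')).trace
          + (ρ * (W₁ ⊗ₖ W₂)).trace - (ρ * (W₁ ⊗ₖ W₂')).trace) := by
    rw [← e3, ← e4, ← Matrix.trace_add, ← Matrix.mul_add, kron_identity_plus,
      Matrix.mul_smul, Matrix.trace_smul]
    simp only [Matrix.mul_add, Matrix.mul_sub, Matrix.trace_add, Matrix.trace_sub,
      hTE, hT1, hT3, hT2, smul_eq_mul]
  have hA : (ρ * (W₁ ⊗ₖ W₂)).trace - (ρ * (W₁ ⊗ₖ W₂')).trace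
      = (((r3 + r4 - (r1 + r2)) / 4 : ℝ) : ℂ) := by
    push_cast
    linear_combination (hsum1 - hsum2) / 4
  have hB : 1 - (ε : ℂ) * (ρ * (W₂ ⊗ₖ W₂')).trace
      = (((r1 + r2 + (r3 + r4)) / 4 : ℝ) : ℂ) := by
    push_cast
    linear_combination (-(hsum1 + hsum2)) / 4
  have hre := congrArg Complex.re hB
  simp only [Complex.sub_re, Complex.one_re, Complex.mul_re, Complex.ofReal_re,
    Complex.ofReal_im, zero_mul, sub_zero] at hre
  rw [hA, Complex.norm_real, Real.norm_eq_abs, hre]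
  rw [abs_le]
  constructor <;> linarith

end BellPaper
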